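/- arXiv:2507.05642 — 3 statements merged into one kernel-verified Lean document; each statement's English description precedes it below -/
import Mathlib

section
/- For any integer n ≥ 2, there does not exist a quantum Latin square of order n with cardinality n+1. -/
noncomputable section

/-- The `n`-dimensional complex Hilbert space `ℋ_n`. -/
abbrev Hs (n : ℕ) := EuclideanSpace ℂ (Fin n)

/-- Two vectors are identified when they differ by a global phase `e^{iθ}`. -/
def PhaseEq {E : Type*} [AddCommGroup E] [Module ℂ E] (u v : E) : Prop :=
  ∃ θ : ℝ, u = Complex.exp (θ * Complex.I) • v

/-- A quantum Latin square of order `n`: each row and each column is an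
orthonormal family of `n` vectors in `ℋ_n`, hence an orthonormal basis. -/
def IsQLS {n : ℕ} (M : Fin n → Fin n → Hs n) : Prop :=
  (∀ i, Orthonormal ℂ (fun j => M i j)) ∧ (∀ j, Orthonormal ℂ (fun i => M i j))

/-- The family `f` has exactly `c` distinct members up to global phase. -/
def FamCardEq {ι E : Type*} [AddCommGroup E] [Module ℂ E] (f : ι → E) (c : ℕ) : Prop :=
  ∃ reps : Fin c → E,
    (∀ i, ∃ k, PhaseEq (f i) (reps k)) ∧
    (∀ k, ∃ i, PhaseEq (f i) (reps k)) ∧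
    (∀ k l, k ≠ l → ¬ PhaseEq (reps k) (reps l))

/-- The cardinality of a quantum Latin square is `c`. -/
def CardEq {n : ℕ} (M : Fin n → Fin n → Hs n) (c : ℕ) : Prop :=
  FamCardEq (fun p : Fin n × Fin n => M p.1 p.2) c

local notation "⟪" x ", " y "⟫" => @inner ℂ _ _ x y

lemma phaseEq_symm {E : Type*} [AddCommGroup E] [Module ℂ E] {u v : E}
    (h : PhaseEq u v) : PhaseEq v u := by
  obtain ⟨θ, h⟩ := h
  refine ⟨-θ, ?_⟩
  have h0 : ((-θ : ℝ) : ℂ) * Complex.I + (θ : ℝ) * Complex.I = 0 := by push_cast; ring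
  rw [h, smul_smul, ← Complex.exp_add, h0, Complex.exp_zero, one_smul]

lemma phaseEq_trans {E : Type*} [AddCommGroup E] [Module ℂ E] {u v w : E}
    (h1 : PhaseEq u v) (h2 : PhaseEq v w) : PhaseEq u w := by
  obtain ⟨θ, h1⟩ := h1
  obtain ⟨φ, h2⟩ := h2
  refine ⟨θ + φ, ?_⟩
  rw [h1, h2, smul_smul, ← Complex.exp_add]
  congr 2
  push_cast; ring

lemma phaseEq_norm {n : ℕ} {u v : Hs n} (h : PhaseEq u v) : ‖u‖ = ‖v‖ := by
  obtain ⟨θ, rfl⟩ := h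
  rw [norm_smul]
  simp [Complex.norm_exp]

lemma phaseEq_inner_zero {n : ℕ} {u v u' v' : Hs n} (hu : PhaseEq u u') (hv : PhaseEq v v')
    (h : ⟪u, v⟫ = 0) : ⟪u', v'⟫ = 0 := by
  obtain ⟨θ, hu⟩ := hu
  obtain ⟨φ, hv⟩ := hv
  rw [hu, hv, inner_smul_left, inner_smul_right] at h
  simpa [mul_eq_zero, map_eq_zero, Complex.exp_ne_zero] using h

/-- If `v` is a unit vector orthogonal to all members of an orthonormal basis-sized family
except possibly `f i₀`, then `v` is a phase multiple of `f i₀`. -/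
lemma keyLin {n : ℕ} (f : Fin n → Hs n) (hf : Orthonormal ℂ f)
    (i₀ : Fin n) (v : Hs n) (hv : ‖v‖ = 1)
    (ho : ∀ i, i ≠ i₀ → ⟪f i, v⟫ = 0) : PhaseEq v (f i₀) := by
  have : Nonempty (Fin n) := ⟨i₀⟩
  have hcard : Fintype.card (Fin n) = Module.finrank ℂ (Hs n) := by
    simp [finrank_euclideanSpace_fin]
  have hsp : ⊤ ≤ Submodule.span ℂ (Set.range f) :=
    (hf.linearIndependent.span_eq_top_of_card_eq_finrank hcard).ge
  let b : OrthonormalBasis (Fin n) ℂ (Hs n) := OrthonormalBasis.mk hf hsp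
  have hb : ∀ i, b i = f i := fun i => by simp [b, OrthonormalBasis.coe_mk]
  have hx : ∑ i, ⟪b i, v⟫ • b i = v := b.sum_repr' v
  have hsum : ∑ i, ⟪b i, v⟫ • b i = ⟪f i₀, v⟫ • f i₀ := by
    rw [Finset.sum_eq_single i₀]
    · rw [hb]
    · intro i _ hi
      rw [hb, ho i hi, zero_smul]
    · intro h; exact absurd (Finset.mem_univ i₀) h
  have hx2 : v = ⟪f i₀, v⟫ • f i₀ := hx.symm.trans hsum
  set c : ℂ := ⟪f i₀, v⟫ with hc
  have habs : ‖c‖ = 1 := by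
    have h := hv
    rw [hx2, norm_smul, hf.1 i₀, mul_one] at h
    simpa using h
  refine ⟨c.arg, ?_⟩
  rw [hx2]
  congr 1
  have h := Complex.norm_mul_exp_arg_mul_I c
  rw [habs] at h
  simpa using h.symm

/-- For any integer `n ≥ 2`, there is no quantum Latin square of order `n`
with cardinality `n + 1`. -/
theorem no_qls_card_succ (n : ℕ) (hn : 2 ≤ n)
    (M : Fin n → Fin n → Hs n) (hM : IsQLS M) : ¬ CardEq M (n + 1) := by
  rintro ⟨reps, h1, h2, h3⟩
  choose cls hcls using h1
  have hMnorm : ∀ i j : Fin n, ‖M i j‖ = 1 := fun i j => (hM.1 i).1 j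
  have hrep_norm : ∀ k, ‖reps k‖ = 1 := by
    intro k
    obtain ⟨p, hp⟩ := h2 k
    have h := phaseEq_norm hp
    rw [hMnorm p.1 p.2] at h
    exact h.symm
  have hu : ∀ p k, PhaseEq (M p.1 p.2) (reps k) → cls p = k := by
    intro p k hpk
    by_contra hne
    exact h3 _ _ hne (phaseEq_trans (phaseEq_symm (hcls p)) hpk)
  have horthM : ∀ (i j j' : Fin n), j ≠ j' → ⟪M i j, M i j'⟫ = 0 :=
    fun i j j' h => (hM.1 i).2 h
  have hrow : ∀ (i j j' : Fin n), cls (i, j) ≠ cls (i, j') →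
      ⟪reps (cls (i, j)), reps (cls (i, j'))⟫ = 0 := by
    intro i j j' hne
    have hjj : j ≠ j' := by rintro rfl; exact hne rfl
    exact phaseEq_inner_zero (hcls (i, j)) (hcls (i, j')) (horthM i j j' hjj)
  have hinj : ∀ i : Fin n, Function.Injective (fun j => cls (i, j)) := by
    intro i j j' h
    by_contra hne
    have h0 := phaseEq_inner_zero (hcls (i, j)) (hcls (i, j')) (horthM i j j' hne)
    have h' : cls (i, j) = cls (i, j') := h
    rw [h'] at h0
    have hz : reps (cls (i, j')) = 0 := inner_self_eq_zero.mp h0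
    have h1 := hrep_norm (cls (i, j'))
    rw [hz] at h1
    simp at h1
  set R : Fin n → Finset (Fin (n + 1)) :=
    fun i => Finset.image (fun j => cls (i, j)) Finset.univ with hRdef
  have hRcard : ∀ i, (R i).card = n := by
    intro i
    rw [hRdef]
    rw [Finset.card_image_of_injective _ (hinj i), Finset.card_univ, Fintype.card_fin]
  have hCcard : ∀ i, (Finset.univ \ R i).card = 1 := by
    intro i
    rw [Finset.card_sdiff_of_subset (Finset.subset_univ _), Finset.card_univ, Fintype.card_fin, hRcard]
    omega
  have main : ∃ l1 l2 : Fin (n + 1), l1 ≠ l2 ∧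
      (∀ k l, k ≠ l → k ≠ l2 → l ≠ l2 → ⟪reps k, reps l⟫ = 0) ∧
      (∀ k, k ≠ l1 → k ≠ l2 → ⟪reps k, reps l2⟫ = 0) := by
    by_cases hall : ∀ k l : Fin (n + 1), k ≠ l → ⟪reps k, reps l⟫ = 0
    · refine ⟨0, Fin.last n, ?_, fun k l h _ _ => hall k l h, fun k _ h => hall _ _ h⟩
      simp only [ne_eq, Fin.ext_iff, Fin.val_zero, Fin.val_last]
      omega
    · push_neg at hall
      obtain ⟨l1, l2, hne, hnz⟩ := hall
      have hnotboth : ∀ i, l1 ∉ R i ∨ l2 ∉ R i := by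
        intro i
        by_contra hc
        push_neg at hc
        obtain ⟨j1, _, hj1⟩ := Finset.mem_image.mp hc.1
        obtain ⟨j2, _, hj2⟩ := Finset.mem_image.mp hc.2
        apply hnz
        rw [← hj1, ← hj2]
        apply hrow
        rw [hj1, hj2]; exact hne
      have hIn : ∀ k, k ≠ l1 → k ≠ l2 → ∀ i, k ∈ R i := by
        intro k hk1 hk2 i
        by_contra hk
        have hkC : k ∈ Finset.univ \ R i := Finset.mem_sdiff.mpr ⟨Finset.mem_univ _, hk⟩
        have hl : l1 ∈ Finset.univ \ R i ∨ l2 ∈ Finset.univ \ R i := by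
          rcases hnotboth i with h | h
          · exact Or.inl (Finset.mem_sdiff.mpr ⟨Finset.mem_univ _, h⟩)
          · exact Or.inr (Finset.mem_sdiff.mpr ⟨Finset.mem_univ _, h⟩)
        obtain ⟨a, ha⟩ := Finset.card_eq_one.mp (hCcard i)
        rw [ha] at hkC hl
        simp only [Finset.mem_singleton] at hkC hl
        rcases hl with h | h
        · exact hk1 (by rw [hkC, h])
        · exact hk2 (by rw [hkC, h])
      have hOrthAll : ∀ k l, k ≠ l → l ≠ l1 → l ≠ l2 → ⟪reps k, reps l⟫ = 0 := by
        intro k l hkl hl1 hl2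
        obtain ⟨p, hp⟩ := h2 k
        have hpk : cls (p.1, p.2) = k := hu p k hp
        obtain ⟨j, _, hj⟩ := Finset.mem_image.mp (hIn l hl1 hl2 p.1)
        have h0 := hrow p.1 p.2 j (by rw [hpk, hj]; exact hkl)
        rwa [hpk, hj] at h0
      refine ⟨l1, l2, hne, ?_, ?_⟩
      · intro k l hkl hk2 hl2
        by_cases hl1 : l = l1
        · have hk1 : k ≠ l1 := fun h => hkl (h.trans hl1.symm)
          rw [hl1]
          exact inner_eq_zero_symm.mp (hOrthAll l1 k (Ne.symm hk1) hk1 hk2)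
        · exact hOrthAll k l hkl hl1 hl2
      · intro k hk1 hk2
        exact inner_eq_zero_symm.mp (hOrthAll l2 k (Ne.symm hk2) hk1 hk2)
  obtain ⟨l1, l2, hne12, hA, hB⟩ := main
  set f : Fin n → Hs n := fun i => reps (l2.succAbove i) with hfdef
  have hfo : Orthonormal ℂ f := by
    constructor
    · intro i; exact hrep_norm _
    · intro i j hij
      apply hA
      · exact fun h => hij (Fin.succAbove_right_injective h)
      · exact Fin.succAbove_ne l2 i
      · exact Fin.succAbove_ne l2 j
  obtain ⟨i₀, hi₀⟩ := Fin.exists_succAbove_eq hne12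
  have hKey : PhaseEq (reps l2) (f i₀) := by
    apply keyLin f hfo i₀ (reps l2) (hrep_norm l2)
    intro i hi
    apply hB
    · intro h
      exact hi (Fin.succAbove_right_injective (h.trans hi₀.symm))
    · exact Fin.succAbove_ne l2 i
  rw [hfdef] at hKey
  simp only at hKey
  rw [hi₀] at hKey
  exact h3 l2 l1 (Ne.symm hne12) hKey
end
end

section
/- For any real numbers c, d, x, y, the 4×4 block matrix with A_c and A_d on the diagonal blocks and B_x, B_y on the off-diagonal blocks is a quantum Latin square of order 4 in ℋ_2⊗ℋ_2, where A_a is the 2×2 array ((|00⟩+a|01⟩, −a|00⟩+|01⟩), (−a|00⟩+|01⟩, |00⟩+a|01⟩))/√(1+a²) and B_a is the analogous array built from |10⟩, |11⟩. -/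
noncomputable section

/-- `ℋ₂ ⊗ ℋ₂`, with orthonormal basis `|00⟩, |01⟩, |10⟩, |11⟩`. -/
abbrev H4 := EuclideanSpace ℂ (Fin 4)

/-- `|00⟩, |01⟩, |10⟩, |11⟩` (in this order). -/
def e4 : Fin 4 → H4 := fun i => EuclideanSpace.single i 1

/-- The 2×2 array `A_a` built on `|00⟩, |01⟩`. -/
def Aarr (a : ℝ) : Fin 2 → Fin 2 → H4 := fun i j =>
  ((Real.sqrt (1 + a ^ 2) : ℝ)⁻¹ : ℂ) •
    (if i = j then e4 0 + (a : ℂ) • e4 1 else (-(a : ℂ)) • e4 0 + e4 1)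

/-- The 2×2 array `B_a` built on `|10⟩, |11⟩`. -/
def Barr (a : ℝ) : Fin 2 → Fin 2 → H4 := fun i j =>
  ((Real.sqrt (1 + a ^ 2) : ℝ)⁻¹ : ℂ) •
    (if i = j then e4 2 + (a : ℂ) • e4 3 else (-(a : ℂ)) • e4 2 + e4 3)

/-- A quantum Latin square of order 4: rows and columns are orthonormal bases. -/
def IsQLS4 (M : Fin 4 → Fin 4 → H4) : Prop :=
  (∀ i, Orthonormal ℂ (fun j => M i j)) ∧ (∀ j, Orthonormal ℂ (fun i => M i j))

/-- The 4×4 block matrix with diagonal blocks `A_c, A_d` and off-diagonal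
blocks `B_x, B_y`. -/
def blockQLS (c d x y : ℝ) : Fin 4 → Fin 4 → H4 := fun i j =>
  Matrix.reindex finSumFinEquiv finSumFinEquiv
    (Matrix.fromBlocks (Matrix.of (Aarr c)) (Matrix.of (Barr x))
      (Matrix.of (Barr y)) (Matrix.of (Aarr d))) i j

lemma inner_e4 (i j : Fin 4) : inner ℂ (e4 i) (e4 j) = if i = j then (1:ℂ) else 0 := by
  simp [e4, EuclideanSpace.inner_single_left, EuclideanSpace.single_apply, eq_comm]

lemma key_scalar (a : ℝ) :
    ((Real.sqrt (1 + a ^ 2) : ℝ)⁻¹ : ℂ) * ((Real.sqrt (1 + a ^ 2) : ℝ)⁻¹ : ℂ) * (1 + (a:ℂ)*a) = 1 := by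
  have h : (0:ℝ) < 1 + a ^ 2 := by positivity
  have hs : Real.sqrt (1 + a ^ 2) * Real.sqrt (1 + a ^ 2) = 1 + a ^ 2 :=
    Real.mul_self_sqrt h.le
  have hr : ((Real.sqrt (1 + a ^ 2))⁻¹ * (Real.sqrt (1 + a ^ 2))⁻¹ * (1 + a*a) : ℝ) = 1 := by
    rw [← mul_inv, hs]
    field_simp
  calc ((Real.sqrt (1 + a ^ 2) : ℝ)⁻¹ : ℂ) * ((Real.sqrt (1 + a ^ 2) : ℝ)⁻¹ : ℂ) * (1 + (a:ℂ)*a)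
      = (((Real.sqrt (1 + a ^ 2))⁻¹ * (Real.sqrt (1 + a ^ 2))⁻¹ * (1 + a*a) : ℝ) : ℂ) := by
        push_cast; ring
    _ = 1 := by rw [hr]; norm_num

lemma inner_AA (a : ℝ) (i j k l : Fin 2) :
    inner ℂ (Aarr a i j) (Aarr a k l) = if ((i = j) ↔ (k = l)) then (1:ℂ) else 0 := by
  by_cases hij : i = j <;> by_cases hkl : k = l <;>
    simp only [Aarr, hij, hkl, if_true, if_false, if_pos, if_neg, iff_true, iff_false,
      not_true, not_false_iff, eq_self_iff_true] <;>
    simp only [inner_smul_left, inner_smul_right, inner_add_left, inner_add_right,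
      Complex.conj_ofReal, inner_e4] <;>
    simp [-mul_eq_zero] <;>
    first
      | linear_combination key_scalar a
      | ring

lemma inner_BB (a : ℝ) (i j k l : Fin 2) :
    inner ℂ (Barr a i j) (Barr a k l) = if ((i = j) ↔ (k = l)) then (1:ℂ) else 0 := by
  by_cases hij : i = j <;> by_cases hkl : k = l <;>
    simp only [Barr, hij, hkl, if_true, if_false, iff_true, iff_false,
      not_true, not_false_iff, eq_self_iff_true] <;>
    simp only [inner_smul_left, inner_smul_right, inner_add_left, inner_add_right,
      Complex.conj_ofReal, inner_e4] <;>
    simp [-mul_eq_zero] <;>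
    first
      | linear_combination key_scalar a
      | ring

lemma inner_AB (a b : ℝ) (i j k l : Fin 2) : inner ℂ (Aarr a i j) (Barr b k l) = (0:ℂ) := by
  by_cases hij : i = j <;> by_cases hkl : k = l <;>
    simp only [Aarr, Barr, hij, hkl, if_true, if_false, smul_add, inner_smul_left,
      inner_smul_right, inner_add_left, inner_add_right, inner_e4] <;>
    simp [-mul_eq_zero]

lemma inner_BA (a b : ℝ) (i j k l : Fin 2) : inner ℂ (Barr a i j) (Aarr b k l) = (0:ℂ) := by
  by_cases hij : i = j <;> by_cases hkl : k = l <;>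
    simp only [Aarr, Barr, hij, hkl, if_true, if_false, smul_add, inner_smul_left,
      inner_smul_right, inner_add_left, inner_add_right, inner_e4] <;>
    simp [-mul_eq_zero]

lemma blk0 : finSumFinEquiv.symm (0 : Fin (2+2)) = Sum.inl (0 : Fin 2) := rfl
lemma blk1 : finSumFinEquiv.symm (1 : Fin (2+2)) = Sum.inl (1 : Fin 2) := rfl
lemma blk2 : finSumFinEquiv.symm (2 : Fin (2+2)) = Sum.inr (0 : Fin 2) := rfl
lemma blk3 : finSumFinEquiv.symm (3 : Fin (2+2)) = Sum.inr (1 : Fin 2) := rfl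

lemma blockQLS_eq (c d x y : ℝ) : blockQLS c d x y =
    ![![Aarr c 0 0, Aarr c 0 1, Barr x 0 0, Barr x 0 1],
      ![Aarr c 1 0, Aarr c 1 1, Barr x 1 0, Barr x 1 1],
      ![Barr y 0 0, Barr y 0 1, Aarr d 0 0, Aarr d 0 1],
      ![Barr y 1 0, Barr y 1 1, Aarr d 1 0, Aarr d 1 1]] := by
  funext i j
  fin_cases i <;> fin_cases j <;> rfl

/-- For any real `c, d, x, y`, the block matrix `(A_c, B_x; B_y, A_d)` is a
quantum Latin square of order 4 in `ℋ₂ ⊗ ℋ₂`. -/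
theorem blockQLS_is_qls (c d x y : ℝ) : IsQLS4 (blockQLS c d x y) := by
  rw [IsQLS4, blockQLS_eq]
  constructor <;> intro i <;>
    rw [orthonormal_iff_ite] <;> intro p q <;>
    fin_cases i <;> fin_cases p <;> fin_cases q <;>
    simp [inner_AA, inner_BB, inner_AB, inner_BA, -PiLp.inner_apply, -inner_self_eq_norm_sq_to_K, Fin.ext_iff, show ((3:Fin 4):ℕ) = 3 from rfl]
end
end

section
/- Let U be an m×n row-quantum Latin rectangle in ℋ_n and V an n×m row-quantum Latin rectangle in ℋ_m, with entries u_{i,j} and v_{k,l} respectively. Then the mn×mn array W whose entry in position (row k, column l) of the (i,j)-th n×m block is w_{i,j;k,l} = u_{i, j+k mod n} ⊗ v_{j, i+l mod m} is a quantum Latin square of order mn. -/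
noncomputable section

/-- Concrete tensor product `u ⊗ v` of Euclidean space vectors. -/
def tens {ι κ : Type*} (u : EuclideanSpace ℂ ι) (v : EuclideanSpace ℂ κ) :
    EuclideanSpace ℂ (ι × κ) :=
  (WithLp.equiv 2 _).symm (fun p : ι × κ => u p.1 * v p.2)

/-- An array (with arbitrary finite index types) all of whose rows and columns
are orthonormal families. -/
def IsQLSIdx {ι κ E : Type*} [NormedAddCommGroup E] [InnerProductSpace ℂ E]
    (M : ι → κ → E) : Prop :=
  (∀ i, Orthonormal ℂ (fun j => M i j)) ∧ (∀ j, Orthonormal ℂ (fun i => M i j))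

open scoped ComplexOrder in
lemma inner_tens {ι κ : Type*} [Fintype ι] [Fintype κ]
    (u u' : EuclideanSpace ℂ ι) (v v' : EuclideanSpace ℂ κ) :
    inner ℂ (tens u v) (tens u' v') = (inner ℂ u u' : ℂ) * inner ℂ v v' := by
  simp only [tens, PiLp.inner_apply, RCLike.inner_apply, WithLp.equiv_symm_apply,
    Fintype.sum_prod_type, map_mul]
  rw [Finset.sum_mul_sum]
  congr 1; ext i; congr 1; ext j; ring

/-- Product construction: if `U` is an `m×n` row-quantum Latin rectangle in
`ℋ_n` and `V` an `n×m` row-quantum Latin rectangle in `ℋ_m`, then the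
`mn × mn` array `W` with entry `u_{i, j+k} ⊗ v_{j, i+l}` at row `(i,k)` and
column `(j,l)` (sums mod `n` resp. mod `m`) is a quantum Latin square of
order `mn`. -/
theorem product_construction_is_qls (m n : ℕ)
    (U : Fin m → Fin n → EuclideanSpace ℂ (Fin n))
    (V : Fin n → Fin m → EuclideanSpace ℂ (Fin m))
    (hU : ∀ i, Orthonormal ℂ (fun j => U i j))
    (hV : ∀ j, Orthonormal ℂ (fun l => V j l)) :
    IsQLSIdx (fun (r : Fin m × Fin n) (c : Fin n × Fin m) =>
      tens (U r.1 (c.1 + r.2)) (V c.1 (r.1 + c.2))) := by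
  have key : ∀ (i i' : Fin m) (a a' : Fin n) (j j' : Fin n) (b b' : Fin m),
      (inner ℂ (tens (U i a) (V j b)) (tens (U i' a') (V j' b')) : ℂ) =
      inner ℂ (U i a) (U i' a') * inner ℂ (V j b) (V j' b') := fun _ _ _ _ _ _ _ _ =>
    inner_tens _ _ _ _
  constructor
  · intro r
    rw [orthonormal_iff_ite]
    rintro ⟨j, l⟩ ⟨j', l'⟩
    rw [key]
    by_cases hj : j = j'
    · subst hj
      rw [(orthonormal_iff_ite.mp (hU r.1)) (j + r.2) (j + r.2),
        (orthonormal_iff_ite.mp (hV j)) (r.1 + l) (r.1 + l')]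
      by_cases hl : l = l' <;> simp [hl, Prod.ext_iff, add_right_cancel_iff]
    · rw [(orthonormal_iff_ite.mp (hU r.1)) (j + r.2) (j' + r.2)]
      have : ¬ (j + r.2 = j' + r.2) := fun h => hj (add_right_cancel h)
      simp [this, Prod.ext_iff, hj]
  · intro c
    rw [orthonormal_iff_ite]
    rintro ⟨i, k⟩ ⟨i', k'⟩
    rw [key]
    by_cases hi : i = i'
    · subst hi
      rw [(orthonormal_iff_ite.mp (hU i)) (c.1 + k) (c.1 + k'),
        (orthonormal_iff_ite.mp (hV c.1)) (i + c.2) (i + c.2)]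
      by_cases hk : k = k' <;> simp [hk, Prod.ext_iff, add_left_cancel_iff]
    · rw [(orthonormal_iff_ite.mp (hV c.1)) (i + c.2) (i' + c.2)]
      have : ¬ (i + c.2 = i' + c.2) := fun h => hi (add_right_cancel h)
      simp [this, Prod.ext_iff, hi]
end
end
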